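/- For every r_ll ∈ H, the vector r_R := (S + R·id)⁻¹((S + R·P_{*,R}) r_ll) satisfies the penalized normal equations (S + R·(id − P)) r_R = S r_ll (verification that formula (13) solves the normal equations (12)). -/

import Mathlib

open scoped RealInnerProductSpace

/-- formula (13) solves the normal equations (12): for every
`r_ll ∈ H`, the vector `r_R := (S + R·id)⁻¹((S + R·P_{*,R}) r_ll)` satisfies the
penalized normal equations `(S + R·(id − P)) r_R = S r_ll`.  Here `T` is the
inverse of `S + R·id` and `Pstar` is the map `P_{*,R}`: `Pstar r` is the unique
element `v ∈ V` with `Λ_{*,R} v = P((S + R·id)⁻¹(S r))`. -/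
theorem formula13_solves_normal_equations
    {H : Type*} [NormedAddCommGroup H] [InnerProductSpace ℝ H] [FiniteDimensional ℝ H]
    (S : Module.End ℝ H)
    (hS_sym : ∀ x y : H, ⟪S x, y⟫ = ⟪x, S y⟫)
    (hS_psd : ∀ x : H, 0 ≤ ⟪x, S x⟫)
    (V : Submodule ℝ H)
    (P : Module.End ℝ H) (hP : ∀ x : H, P x = (Submodule.orthogonalProjection V x : H))
    (R : ℝ) (hR : 0 < R)
    (T : Module.End ℝ H)
    (hT1 : T * (S + R • 1) = 1) (hT2 : (S + R • 1) * T = 1)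
    (Pstar : Module.End ℝ H)
    (hPstar_mem : ∀ r : H, Pstar r ∈ V)
    (hPstar_eq : ∀ r : H, P (T (S (Pstar r))) = P (T (S r)))
    (hΛ_inj : ∀ v ∈ V, ∀ w ∈ V, P (T (S v)) = P (T (S w)) → v = w)
    (r_ll : H) :
    (S + R • (1 - P)) (T ((S + R • Pstar) r_ll)) = S r_ll := by
  have hT1' : ∀ x : H, T ((S + R • 1) x) = x := fun x =>
    congrArg (fun f : Module.End ℝ H => f x) hT1
  have hT2' : ∀ x : H, (S + R • 1) (T x) = x := fun x =>
    congrArg (fun f : Module.End ℝ H => f x) hT2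
  have hPmem : ∀ v ∈ V, P v = v := by
    intro v hv
    rw [hP]
    exact congrArg _ (Submodule.orthogonalProjection_mem_subspace_eq_self (⟨v, hv⟩ : V))
  set rR := T ((S + R • Pstar) r_ll) with hrR
  have h1 : S rR + R • rR = S r_ll + R • Pstar r_ll := by
    have h := hT2' ((S + R • Pstar) r_ll)
    rw [LinearMap.add_apply, LinearMap.smul_apply, Module.End.one_apply] at h
    rw [h, LinearMap.add_apply, LinearMap.smul_apply]
  have hdecomp : rR = T (S r_ll) + Pstar r_ll - T (S (Pstar r_ll)) := by
    have harg : (S + R • Pstar) r_ll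
        = S r_ll + ((S + R • 1) (Pstar r_ll) - S (Pstar r_ll)) := by
      simp [LinearMap.add_apply, LinearMap.smul_apply]
    rw [hrR, harg, map_add, map_sub, hT1']
    abel
  have hPrR : P rR = Pstar r_ll := by
    rw [hdecomp, map_sub, map_add, hPstar_eq r_ll, hPmem _ (hPstar_mem r_ll)]
    abel
  have : (S + R • ((1 : Module.End ℝ H) - P)) rR = (S rR + R • rR) - R • P rR := by
    simp [LinearMap.add_apply, LinearMap.smul_apply, LinearMap.sub_apply, smul_sub]
    abel
  rw [this, h1, hPrR]
  abel
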